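/- Let B_m(n) denote the number of q-cyclotomic classes modulo n having length exactly m. Then the covering radius of F_n ⊆ L^n in the symbol Hamming metric equals n − B_m(n). Moreover, for n = q^m − 1 one has B_m(n) = (1/m)·∑_{r ∣ m} μ(m/r)·(q^r − 1). -/

import Mathlib

open scoped Classical
open Finset

/-- The `q`-cyclotomic class of `s` modulo `n`, as a finset. -/
noncomputable def cycClass (q n : ℕ) [NeZero n] (s : ZMod n) : Finset (ZMod n) :=
  Finset.univ.filter (fun x => ∃ t : ℕ, x = (q : ZMod n) ^ t * s)

/-- The set of all `q`-cyclotomic classes modulo `n`. -/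
noncomputable def cycClasses (q n : ℕ) [NeZero n] : Finset (Finset (ZMod n)) :=
  Finset.univ.image (cycClass q n)

noncomputable def per (q n : ℕ) [NeZero n] (s : ZMod n) : ℕ :=
  sInf {t | 0 < t ∧ (q : ZMod n) ^ t * s = s}

section Aux
variable {q m n : ℕ} [NeZero n]

lemma mem_cycClass {s x : ZMod n} : x ∈ cycClass q n s ↔ ∃ t : ℕ, x = (q : ZMod n) ^ t * s := by
  simp [cycClass]

lemma self_mem_cycClass (s : ZMod n) : s ∈ cycClass q n s := mem_cycClass.2 ⟨0, by simp⟩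

lemma pow_mul_eval {a : ℕ} {s : ZMod n} (h : (q : ZMod n) ^ a * s = s) (k : ℕ) :
    (q : ZMod n) ^ (a * k) * s = s := by
  induction k with
  | zero => simp
  | succ k ih =>
    have : a * (k + 1) = a * k + a := by ring
    rw [this, pow_add, mul_assoc, h, ih]

lemma per_pos_spec (hq1 : (q : ZMod n) ^ m = 1) (hm : 0 < m) (s : ZMod n) :
    0 < per q n s ∧ (q : ZMod n) ^ (per q n s) * s = s :=
  Nat.sInf_mem (⟨m, hm, by rw [hq1, one_mul]⟩ : {t | 0 < t ∧ (q : ZMod n) ^ t * s = s}.Nonempty)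

lemma per_min {s : ZMod n} {t : ℕ} (ht : 0 < t) (h : (q : ZMod n) ^ t * s = s) :
    per q n s ≤ t := Nat.sInf_le ⟨ht, h⟩

lemma per_dvd (hq1 : (q : ZMod n) ^ m = 1) (hm : 0 < m) {s : ZMod n} {t : ℕ}
    (h : (q : ZMod n) ^ t * s = s) : per q n s ∣ t := by
  have hper := per_pos_spec hq1 hm s
  set d := per q n s with hd
  have ht : t = d * (t / d) + t % d := (Nat.div_add_mod t d).symm
  have h2 : (q : ZMod n) ^ (t % d) * s = s := by
    have h3 := pow_mul_eval hper.2 (t / d)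
    calc (q : ZMod n) ^ (t % d) * s
        = (q : ZMod n) ^ (t % d) * ((q : ZMod n) ^ (d * (t / d)) * s) := by rw [h3]
      _ = (q : ZMod n) ^ (d * (t / d) + t % d) * s := by rw [pow_add, ← mul_assoc, mul_comm ((q:ZMod n) ^ (t % d))]
      _ = s := by rw [← ht, h]
  rcases Nat.eq_zero_or_pos (t % d) with h0 | h0
  · exact Nat.dvd_of_mod_eq_zero h0
  · exact absurd (per_min h0 h2) (not_le.2 (Nat.mod_lt _ hper.1))

lemma per_dvd_m (hq1 : (q : ZMod n) ^ m = 1) (hm : 0 < m) (s : ZMod n) : per q n s ∣ m :=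
  per_dvd hq1 hm (by rw [hq1, one_mul])

lemma pow_cancel (hq1 : (q : ZMod n) ^ m = 1) (hm : 0 < m) {s : ZMod n} {a b : ℕ} (hab : a ≤ b)
    (h : (q : ZMod n) ^ a * s = (q : ZMod n) ^ b * s) :
    (q : ZMod n) ^ (b - a) * s = s := by
  have key : ∀ c : ℕ, (q : ZMod n) ^ (a * (m - 1)) * ((q : ZMod n) ^ (a + c) * s)
      = (q : ZMod n) ^ c * s := by
    intro c
    have harith : a * (m - 1) + (a + c) = m * a + c := by
      cases m with
      | zero => omega
      | succ m => rw [Nat.succ_sub_one, Nat.succ_mul, Nat.mul_comm]; omega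
    rw [← mul_assoc, ← pow_add, harith, pow_add, pow_mul, hq1, one_pow, one_mul]
  have h2 := key (b - a)
  rw [Nat.add_sub_cancel' hab, ← h] at h2
  have h1 : (q : ZMod n) ^ (a * (m - 1)) * ((q : ZMod n) ^ a * s) = s := by
    simpa using key 0
  rw [h1] at h2
  exact h2.symm

lemma pow_mod_per (hq1 : (q : ZMod n) ^ m = 1) (hm : 0 < m) (s : ZMod n) (t : ℕ) :
    (q : ZMod n) ^ t * s = (q : ZMod n) ^ (t % per q n s) * s := by
  set d := per q n s with hd
  have hper := per_pos_spec hq1 hm s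
  conv_lhs => rw [← Nat.div_add_mod t d]
  rw [pow_add, mul_comm ((q:ZMod n) ^ (d * (t/d))), mul_assoc, pow_mul_eval hper.2]

lemma pow_inj_per (hq1 : (q : ZMod n) ^ m = 1) (hm : 0 < m) {s : ZMod n} {a b : ℕ}
    (ha : a < per q n s) (hb : b < per q n s)
    (h : (q : ZMod n) ^ a * s = (q : ZMod n) ^ b * s) : a = b := by
  rcases lt_trichotomy a b with hab | hab | hab
  · have := pow_cancel hq1 hm hab.le h
    have hle := per_min (by omega) this
    omega
  · exact hab
  · have := pow_cancel hq1 hm hab.le h.symm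
    have hle := per_min (by omega) this
    omega

lemma cycClass_eq_image (hq1 : (q : ZMod n) ^ m = 1) (hm : 0 < m) (s : ZMod n) :
    cycClass q n s = (range (per q n s)).image (fun t => (q : ZMod n) ^ t * s) := by
  have hper := per_pos_spec hq1 hm s
  ext x
  simp only [mem_cycClass, mem_image, mem_range]
  constructor
  · rintro ⟨t, rfl⟩
    exact ⟨t % per q n s, Nat.mod_lt _ hper.1, (pow_mod_per hq1 hm s t).symm⟩
  · rintro ⟨t, _, rfl⟩
    exact ⟨t, rfl⟩

lemma card_cycClass (hq1 : (q : ZMod n) ^ m = 1) (hm : 0 < m) (s : ZMod n) :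
    (cycClass q n s).card = per q n s := by
  rw [cycClass_eq_image hq1 hm s,
    Finset.card_image_of_injOn (fun a ha b hb h =>
      pow_inj_per hq1 hm (mem_range.1 ha) (mem_range.1 hb) h),
    card_range]

lemma cycClass_eq_of_mem (hq1 : (q : ZMod n) ^ m = 1) (hm : 0 < m) {s x : ZMod n}
    (hx : x ∈ cycClass q n s) : cycClass q n x = cycClass q n s := by
  obtain ⟨t, rfl⟩ := mem_cycClass.1 hx
  have hs : s = (q : ZMod n) ^ (t * (m - 1)) * ((q : ZMod n) ^ t * s) := by
    rw [← mul_assoc, ← pow_add]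
    have : t * (m - 1) + t = m * t := by
      cases m with
      | zero => omega
      | succ m => rw [Nat.succ_sub_one]; ring
    rw [this, pow_mul, hq1]; simp
  ext y
  simp only [mem_cycClass]
  constructor
  · rintro ⟨u, rfl⟩
    exact ⟨u + t, by rw [pow_add, mul_assoc]⟩
  · rintro ⟨u, rfl⟩
    refine ⟨u + t * (m - 1), ?_⟩
    rw [pow_add, mul_assoc, ← hs]

lemma per_eq_of_mem (hq1 : (q : ZMod n) ^ m = 1) (hm : 0 < m) {s x : ZMod n}
    (hx : x ∈ cycClass q n s) : per q n x = per q n s := by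
  rw [← card_cycClass hq1 hm, cycClass_eq_of_mem hq1 hm hx, card_cycClass hq1 hm]

lemma mem_cycClasses {C : Finset (ZMod n)} :
    C ∈ cycClasses q n ↔ ∃ s, C = cycClass q n s := by
  simp [cycClasses, eq_comm]

lemma f_iter {L : Type*} [Monoid L] {f : ZMod n → L}
    (hf : ∀ i, f ((q : ZMod n) * i) = f i ^ q) (t : ℕ) (s : ZMod n) :
    f ((q : ZMod n) ^ t * s) = f s ^ q ^ t := by
  induction t with
  | zero => simp
  | succ t ih =>
    rw [pow_succ, mul_comm ((q:ZMod n) ^ t), mul_assoc, hf, ih, ← pow_mul, pow_succ]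
end Aux


noncomputable def greedySeq (L : Type*) [Field L] [Fintype L] (q : ℕ) : ℕ → L
  | u => Classical.epsilon (fun x : L => ∀ t, (h : t < u) → x ≠ greedySeq L q t ^ q ^ (u - t))
termination_by u => u

lemma greedySeq_spec (L : Type*) [Field L] [Fintype L] (q u : ℕ) (hu : u < Fintype.card L) :
    ∀ t, t < u → greedySeq L q u ≠ greedySeq L q t ^ q ^ (u - t) := by
  have hex : ∃ x : L, ∀ t, t < u → x ≠ greedySeq L q t ^ q ^ (u - t) := by
    set S : Finset L := (range u).image (fun t => greedySeq L q t ^ q ^ (u - t)) with hS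
    have hcard : S.card < Fintype.card L :=
      lt_of_le_of_lt (le_trans (Finset.card_image_le) (by simp)) hu
    have hne : Sᶜ.Nonempty := by
      rw [← Finset.card_pos, Finset.card_compl]
      omega
    obtain ⟨x, hx⟩ := hne
    rw [Finset.mem_compl] at hx
    refine ⟨x, fun t ht h => hx ?_⟩
    rw [hS, Finset.mem_image]
    exact ⟨t, mem_range.2 ht, h.symm⟩
  have h := Classical.epsilon_spec hex
  rw [greedySeq]
  exact h

lemma exists_bad (L : Type*) [Field L] [Fintype L] {q d m : ℕ}
    (hL : Fintype.card L = q ^ m) (hq : 2 ≤ q) (hd : 0 < d) (hdm : d < m) :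
    ∃ x : L, x ^ q ^ d ≠ x := by
  obtain ⟨γ, hγ⟩ := IsCyclic.exists_generator (α := Lˣ)
  have horder : orderOf γ = q ^ m - 1 := by
    rw [orderOf_eq_card_of_forall_mem_zpowers hγ, Nat.card_eq_fintype_card, Fintype.card_units, hL]
  refine ⟨(γ : L), fun h => ?_⟩
  have hu : γ ^ q ^ d = γ := by
    ext
    push_cast
    exact h
  have hdvd : orderOf γ ∣ q ^ d - 1 := by
    have h1 : γ ^ q ^ d = γ ^ 1 := by rwa [pow_one]
    have := (pow_eq_pow_iff_modEq).1 h1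
    exact (Nat.modEq_iff_dvd' (Nat.one_le_two_pow.trans (Nat.pow_le_pow_left hq d))).1 this.symm
  have h2 : 2 ≤ q ^ d := le_trans hq (Nat.le_self_pow hd.ne' q)
  have h3 : q ^ d * 2 ≤ q ^ m := by
    calc q ^ d * 2 ≤ q ^ d * q := Nat.mul_le_mul_left _ hq
    _ = q ^ (d + 1) := by rw [pow_succ]
    _ ≤ q ^ m := Nat.pow_le_pow_right (by omega) (by omega)
  have h4 : orderOf γ ≤ q ^ d - 1 := Nat.le_of_dvd (by omega) hdvd
  omega

section Parts
variable {q m n : ℕ} [NeZero n]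
-- number of s with q^r s = s, when n = q^m - 1
lemma count_fixed (hq2 : 2 ≤ q) (hm : 0 < m) (hneq : n = q ^ m - 1)
    {r : ℕ} (hr : 0 < r) (hrm : r ∣ m) :
    (univ.filter fun s : ZMod n => (q : ZMod n) ^ r * s = s).card = q ^ r - 1 := by
  have hq1r : 1 ≤ q ^ r := Nat.one_le_pow _ _ (by omega)
  set a := q ^ r - 1 with ha
  have ha0 : 0 < a := by
    have : 2 ≤ q ^ r := le_trans hq2 (Nat.le_self_pow hr.ne' q)
    omega
  have hdvd : a ∣ n := by
    obtain ⟨c, rfl⟩ := hrm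
    rw [hneq, pow_mul]
    simpa using Nat.sub_dvd_pow_sub_pow (q ^ r) 1 c
  have hn0 : 0 < n := Nat.pos_of_ne_zero (NeZero.ne n)
  set k := n / a with hk
  have hak : a * k = n := Nat.mul_div_cancel' hdvd
  have hk0 : 0 < k := by
    rcases Nat.eq_zero_or_pos k with h | h
    · rw [h, Nat.mul_zero] at hak; omega
    · exact h
  -- rewrite the condition
  have hcond : ∀ s : ZMod n, ((q : ZMod n) ^ r * s = s) ↔ ((a : ℕ) : ZMod n) * s = 0 := by
    intro s
    rw [ha, Nat.cast_sub hq1r, Nat.cast_pow, Nat.cast_one, sub_mul, one_mul, sub_eq_zero]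
  have hcount : (univ.filter fun s : ZMod n => ((a : ℕ) : ZMod n) * s = 0).card = a := by
    have hbij : (range a).card
        = (univ.filter fun s : ZMod n => ((a : ℕ) : ZMod n) * s = 0).card := by
      apply Finset.card_bij (fun i _ => ((k * i : ℕ) : ZMod n))
      · intro i hi
        simp only [mem_filter, mem_univ, true_and]
        rw [← Nat.cast_mul, ← mul_assoc, hak]
        push_cast
        rw [ZMod.natCast_self, zero_mul]
      · intro i hi j hj hij
        rw [mem_range] at hi hj
        have hvi : ((k * i : ℕ) : ZMod n).val = k * i := ZMod.val_cast_of_lt (by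
          calc k * i < k * a := mul_lt_mul_of_pos_left hi hk0
          _ = n := by rw [Nat.mul_comm]; exact hak)
        have hvj : ((k * j : ℕ) : ZMod n).val = k * j := ZMod.val_cast_of_lt (by
          calc k * j < k * a := mul_lt_mul_of_pos_left hj hk0
          _ = n := by rw [Nat.mul_comm]; exact hak)
        have := congrArg ZMod.val hij
        rw [hvi, hvj] at this
        exact Nat.eq_of_mul_eq_mul_left hk0 this
      · intro s hs
        rw [mem_filter] at hs
        have h0 : (n : ℕ) ∣ a * s.val := by
          rw [← ZMod.natCast_eq_zero_iff, Nat.cast_mul, ZMod.natCast_zmod_val]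
          exact hs.2
        have h0' : a * k ∣ a * s.val := by rw [hak]; exact h0
        have hks : k ∣ s.val := (Nat.mul_dvd_mul_iff_left ha0).1 h0'
        obtain ⟨j, hj⟩ := hks
        refine ⟨j, mem_range.2 ?_, ?_⟩
        · have hlt : k * j < k * a := by
            rw [← hj, Nat.mul_comm k a, hak]; exact ZMod.val_lt s
          exact lt_of_mul_lt_mul_left hlt (Nat.zero_le k)
        · rw [← hj, ZMod.natCast_zmod_val]
    rw [Finset.card_range] at hbij
    exact hbij.symm
  rw [Finset.filter_congr (fun s _ => by rw [hcond s]), hcount]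

lemma fixed_eq_sum (hq1 : (q : ZMod n) ^ m = 1) (hm : 0 < m) {r : ℕ} (hr : 0 < r) :
    (univ.filter fun s : ZMod n => (q : ZMod n) ^ r * s = s).card
      = ∑ d ∈ r.divisors, (univ.filter fun s : ZMod n => per q n s = d).card := by
  rw [Finset.card_eq_sum_card_fiberwise (f := fun s => per q n s)
    (t := r.divisors) (fun s hs => Nat.mem_divisors.2 ⟨per_dvd hq1 hm (mem_filter.1 hs).2, hr.ne'⟩)]
  apply Finset.sum_congr rfl
  intro d hd
  congr 1
  ext s
  simp only [mem_filter, mem_univ, true_and]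
  constructor
  · rintro ⟨-, h⟩; exact h
  · intro h
    refine ⟨?_, h⟩
    obtain ⟨c, hc⟩ := Nat.dvd_of_mem_divisors hd
    rw [hc, ← h, pow_mul_eval (per_pos_spec hq1 hm s).2]

lemma perm_eq_mul (hq1 : (q : ZMod n) ^ m = 1) (hm : 0 < m) :
    (univ.filter fun s : ZMod n => per q n s = m).card
      = ((cycClasses q n).filter (fun C => C.card = m)).card * m := by
  rw [Finset.card_eq_sum_card_fiberwise (f := fun s => cycClass q n s)
    (t := (cycClasses q n).filter (fun C => C.card = m))
    (fun s hs => by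
      rw [Finset.mem_coe, mem_filter]
      refine ⟨Finset.mem_image.2 ⟨s, mem_univ s, rfl⟩, ?_⟩
      rw [card_cycClass hq1 hm s, (mem_filter.1 hs).2])]
  rw [Finset.sum_congr rfl (g := fun _ => m), Finset.sum_const, smul_eq_mul]
  intro C hC
  rw [mem_filter] at hC
  obtain ⟨s₀, rfl⟩ := mem_cycClasses.1 hC.1
  have hfib : ((univ.filter fun s : ZMod n => per q n s = m).filter
      (fun s => cycClass q n s = cycClass q n s₀)) = cycClass q n s₀ := by
    ext x
    simp only [mem_filter, mem_univ, true_and]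
    constructor
    · rintro ⟨-, h⟩; rw [← h]; exact self_mem_cycClass x
    · intro hx
      have hcls := cycClass_eq_of_mem hq1 hm hx
      refine ⟨?_, hcls⟩
      rw [← card_cycClass hq1 hm x, hcls]
      exact hC.2
  rw [hfib, hC.2]

lemma part2 (hq2 : 2 ≤ q) (hm : 0 < m) (hq1 : (q : ZMod n) ^ m = 1) (hneq : n = q ^ m - 1) :
    ((((cycClasses q n).filter (fun C => C.card = m)).card : ℚ) =
      (1 / (m : ℚ)) * ∑ r ∈ m.divisors,
        (ArithmeticFunction.moebius (m / r) : ℚ) * ((q : ℚ) ^ r - 1)) := by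
  set b := ((cycClasses q n).filter (fun C => C.card = m)).card with hb
  have key : ∀ r, 0 < r → r ∈ {d : ℕ | d ∣ m} →
      (∑ d ∈ r.divisors, ((univ.filter fun s : ZMod n => per q n s = d).card : ℚ))
        = (q : ℚ) ^ r - 1 := by
    intro r hr hrm
    rw [← Nat.cast_sum]
    rw [← fixed_eq_sum hq1 hm hr, count_fixed hq2 hm hneq hr hrm]
    have : 1 ≤ q ^ r := Nat.one_le_pow _ _ (by omega)
    push_cast [Nat.cast_sub this]
    ring
  have hinv := (ArithmeticFunction.sum_eq_iff_sum_smul_moebius_eq_on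
    (f := fun d => ((univ.filter fun s : ZMod n => per q n s = d).card : ℚ))
    (g := fun r => (q : ℚ) ^ r - 1) {d : ℕ | d ∣ m}
    (fun a c hac hc => dvd_trans hac hc)).1 key m hm (dvd_refl m)
  rw [Nat.sum_divisorsAntidiagonal' (f := fun x y => (ArithmeticFunction.moebius x) • ((q : ℚ) ^ y - 1))] at hinv
  rw [perm_eq_mul hq1 hm, ← hb] at hinv
  have hm0 : (m : ℚ) ≠ 0 := Nat.cast_ne_zero.2 hm.ne'
  simp only [zsmul_eq_mul] at hinv
  push_cast at hinv
  field_simp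
  linarith [hinv]

end Parts
lemma part1 (q m n : ℕ) [NeZero n] (L : Type*) [Field L] [Fintype L]
    (hq2 : 2 ≤ q) (hm : 0 < m) (hL : Fintype.card L = q ^ m) (hq1 : (q : ZMod n) ^ m = 1) :
    (Finset.univ.sup (fun g : ZMod n → L =>
        sInf {k : ℕ | ∃ f : ZMod n → L,
          (∀ i, f ((q : ZMod n) * i) = f i ^ q) ∧
          k = (Finset.univ.filter (fun i : ZMod n => g i ≠ f i)).card}) =
      n - ((cycClasses q n).filter (fun C => C.card = m)).card) := by
  have hq0 : q ≠ 0 := by omega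
  have hcard : Fintype.card (ZMod n) = n := ZMod.card n
  have hmL : m < Fintype.card L := by rw [hL]; exact Nat.lt_pow_self (n := m) hq2
  have hpow_card : ∀ x : L, x ^ q ^ m = x := fun x => by rw [← hL]; exact FiniteField.pow_card x
  set fulls := (cycClasses q n).filter (fun C => C.card = m) with hfulls
  set b := fulls.card with hb
  set rep : Finset (ZMod n) → ZMod n := fun C => Classical.epsilon (· ∈ C) with hrep
  set ρ : ZMod n → ZMod n := fun s => rep (cycClass q n s) with hρ
  have hρ_mem : ∀ s, ρ s ∈ cycClass q n s := fun s =>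
    Classical.epsilon_spec (⟨s, self_mem_cycClass s⟩ : ∃ x, x ∈ cycClass q n s)
  have hρ_eq : ∀ {s x : ZMod n}, x ∈ cycClass q n s → ρ x = ρ s := by
    intro s x hx
    show rep _ = rep _
    rw [cycClass_eq_of_mem hq1 hm hx]
  have hper_ρ : ∀ s, per q n (ρ s) = per q n s := fun s => per_eq_of_mem hq1 hm (hρ_mem s)
  have hper_le : ∀ s : ZMod n, per q n s ≤ m := fun s => Nat.le_of_dvd hm (per_dvd_m hq1 hm s)
  -- the "discrete log" T
  set T : ZMod n → ℕ := fun s => sInf {t | s = (q : ZMod n) ^ t * ρ s} with hT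
  have hT_ex : ∀ s : ZMod n, ∃ t, t < per q n s ∧ s = (q : ZMod n) ^ t * ρ s := by
    intro s
    have h1 : s ∈ cycClass q n (ρ s) := by
      rw [cycClass_eq_of_mem hq1 hm (hρ_mem s)]
      exact self_mem_cycClass s
    rw [cycClass_eq_image hq1 hm (ρ s)] at h1
    obtain ⟨t, ht, hts⟩ := Finset.mem_image.1 h1
    exact ⟨t, by rw [← hper_ρ s]; exact mem_range.1 ht, hts.symm⟩
  have hT_spec : ∀ s : ZMod n, s = (q : ZMod n) ^ (T s) * ρ s ∧ T s < per q n s := by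
    intro s
    obtain ⟨t, htlt, hts⟩ := hT_ex s
    have hmem : T s ∈ {t | s = (q : ZMod n) ^ t * ρ s} := Nat.sInf_mem ⟨t, hts⟩
    exact ⟨hmem, lt_of_le_of_lt (Nat.sInf_le hts) htlt⟩
  have hT_unique : ∀ s : ZMod n, per q n s = m → ∀ t, t < m → s = (q : ZMod n) ^ t * ρ s → t = T s := by
    intro s hsm t htm hts
    have h1 := (hT_spec s).1
    have h2 := (hT_spec s).2
    refine pow_inj_per hq1 hm (s := ρ s) ?_ ?_ (by rw [← hts, ← h1])
    · rw [hper_ρ s, hsm]; exact htm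
    · rw [hper_ρ s]; exact h2
  -- upper bound construction
  have hupper : ∀ g : ZMod n → L, ∃ f : ZMod n → L,
      (∀ i, f ((q : ZMod n) * i) = f i ^ q) ∧
      (Finset.univ.filter (fun i : ZMod n => g i ≠ f i)).card ≤ n - b := by
    intro g
    set f₀ : ZMod n → L := fun s => if per q n s = m then g (ρ s) ^ q ^ (T s) else 0 with hf₀
    have hcond : ∀ i, f₀ ((q : ZMod n) * i) = f₀ i ^ q := by
      intro i
      have hmemq : (q : ZMod n) * i ∈ cycClass q n i := mem_cycClass.2 ⟨1, by rw [pow_one]⟩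
      have hρi : ρ ((q : ZMod n) * i) = ρ i := hρ_eq hmemq
      have hperq : per q n ((q : ZMod n) * i) = per q n i := per_eq_of_mem hq1 hm hmemq
      by_cases hcase : per q n i = m
      · have hqi : (q : ZMod n) * i = (q : ZMod n) ^ (T i + 1) * ρ i := by
          conv_lhs => rw [(hT_spec i).1]
          rw [← mul_assoc, ← pow_succ']
        simp only [hf₀, hperq, hcase, if_pos]
        rw [← pow_mul, ← pow_succ]
        rcases Nat.lt_or_ge (T i + 1) m with hlt | hge
        · have := hT_unique ((q : ZMod n) * i) (hperq.trans hcase) (T i + 1) hlt (by rw [hρi]; exact hqi)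
          rw [← this, hρi]
        · have hTm : T i + 1 = m := by
            have := (hT_spec i).2
            rw [hcase] at this
            omega
          have hqi' : (q : ZMod n) * i = ρ i := by rw [hqi, hTm, hq1, one_mul]
          have hT0 : 0 = T ((q : ZMod n) * i) := by
            refine hT_unique _ (hperq.trans hcase) 0 hm ?_
            rw [pow_zero, one_mul, hρi, hqi']
          rw [← hT0, hρi, pow_zero, pow_one, hTm, hpow_card]
      · have h1 : per q n ((q : ZMod n) * i) ≠ m := by rw [hperq]; exact hcase
        simp only [hf₀, if_neg h1, if_neg hcase]
        rw [zero_pow hq0]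
    refine ⟨f₀, hcond, ?_⟩
    have hrep_mem : ∀ C ∈ cycClasses q n, rep C ∈ C := by
      intro C hC
      obtain ⟨s, rfl⟩ := mem_cycClasses.1 hC
      exact Classical.epsilon_spec (⟨s, self_mem_cycClass s⟩ : ∃ x, x ∈ cycClass q n s)
    have hclass_of_mem : ∀ C ∈ cycClasses q n, ∀ x ∈ C, cycClass q n x = C := by
      intro C hC x hx
      obtain ⟨s, rfl⟩ := mem_cycClasses.1 hC
      exact cycClass_eq_of_mem hq1 hm hx
    set R := fulls.image rep with hR
    have hRcard : R.card = b := by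
      rw [hR, Finset.card_image_of_injOn]
      intro C hC C' hC' hCC'
      have h1 : C = cycClass q n (rep C) :=
        (hclass_of_mem C (Finset.mem_of_mem_filter C hC) _ (hrep_mem C (Finset.mem_of_mem_filter C hC))).symm
      have h2 : C' = cycClass q n (rep C') :=
        (hclass_of_mem C' (Finset.mem_of_mem_filter C' hC') _ (hrep_mem C' (Finset.mem_of_mem_filter C' hC'))).symm
      rw [h1, h2, hCC']
    have hsub : (Finset.univ.filter (fun i : ZMod n => g i ≠ f₀ i)) ⊆ Finset.univ \ R := by
      intro s hs
      rw [Finset.mem_sdiff]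
      refine ⟨Finset.mem_univ s, fun hsR => ?_⟩
      obtain ⟨C, hC, hCs⟩ := Finset.mem_image.1 hsR
      have hCmem : C ∈ cycClasses q n := Finset.mem_of_mem_filter C hC
      have hCm : C.card = m := (Finset.mem_filter.1 hC).2
      have hsC : s ∈ C := hCs ▸ hrep_mem C hCmem
      have hclsC : cycClass q n s = C := hclass_of_mem C hCmem s hsC
      have hperm : per q n s = m := by rw [← card_cycClass hq1 hm s, hclsC]; exact hCm
      have hρs : ρ s = s := by rw [hρ]; show rep (cycClass q n s) = s; rw [hclsC, hCs]
      have hT0 : 0 = T s := hT_unique s hperm 0 hm (by rw [pow_zero, one_mul, hρs])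
      have : f₀ s = g s := by
        simp only [hf₀, if_pos hperm, ← hT0, pow_zero, pow_one, hρs]
      exact (Finset.mem_filter.1 hs).2 this.symm
    calc (Finset.univ.filter (fun i : ZMod n => g i ≠ f₀ i)).card
        ≤ (Finset.univ \ R).card := Finset.card_le_card hsub
      _ = n - b := by rw [Finset.card_sdiff_of_subset (Finset.subset_univ R), hRcard, Finset.card_univ, hcard]
  -- lower bound construction
  set bad : ℕ → L := fun d => Classical.epsilon (fun x : L => x ^ q ^ d ≠ x) with hbaddef
  have hbad : ∀ d, 0 < d → d < m → (bad d) ^ q ^ d ≠ bad d := fun d h1 h2 =>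
    Classical.epsilon_spec (exists_bad L hL hq2 h1 h2)
  set g₀ : ZMod n → L := fun s => if per q n s = m then greedySeq L q (T s) else bad (per q n s) with hg₀
  have hlow : ∀ f : ZMod n → L, (∀ i, f ((q : ZMod n) * i) = f i ^ q) →
      n - b ≤ (Finset.univ.filter (fun i : ZMod n => g₀ i ≠ f i)).card := by
    intro f hf
    set A := Finset.univ.filter (fun i : ZMod n => ¬(g₀ i ≠ f i)) with hA
    have hAg : ∀ s ∈ A, g₀ s = f s := fun s hs => not_not.1 (Finset.mem_filter.1 hs).2
    have hAper : ∀ s ∈ A, per q n s = m := by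
      intro s hs
      by_contra hne
      have hlt : per q n s < m := lt_of_le_of_ne (hper_le s) hne
      have h1 : f s ^ q ^ (per q n s) = f s := by
        conv_rhs => rw [← (per_pos_spec hq1 hm s).2]
        rw [f_iter hf]
      have h2 : g₀ s = bad (per q n s) := by simp only [hg₀, if_neg hne]
      exact hbad (per q n s) (per_pos_spec hq1 hm s).1 hlt (by rw [h2.symm.trans (hAg s hs)]; exact h1)
    have hAcard : A.card ≤ b := by
      apply Finset.card_le_card_of_injOn (fun s => cycClass q n s)
      · intro s hs
        rw [hfulls, Finset.mem_coe, Finset.mem_filter]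
        exact ⟨mem_cycClasses.2 ⟨s, rfl⟩, by rw [card_cycClass hq1 hm s]; exact hAper s hs⟩
      · intro s hs s' hs' hcls
        have hcls'' : cycClass q n s = cycClass q n s' := hcls
        have hs := Finset.mem_coe.1 hs
        have hs' := Finset.mem_coe.1 hs'
        have hρss' : ρ s = ρ s' := congrArg rep hcls''
        have hfs : f s = f (ρ s) ^ q ^ (T s) := by
          conv_lhs => rw [(hT_spec s).1]
          rw [f_iter hf]
        have hfs' : f s' = f (ρ s) ^ q ^ (T s') := by
          conv_lhs => rw [(hT_spec s').1]
          rw [f_iter hf, hρss']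
        have hgs : greedySeq L q (T s) = f (ρ s) ^ q ^ (T s) := by
          rw [← hfs, ← hAg s hs, hg₀]
          simp only [if_pos (hAper s hs)]
        have hgs' : greedySeq L q (T s') = f (ρ s) ^ q ^ (T s') := by
          rw [← hfs', ← hAg s' hs', hg₀]
          simp only [if_pos (hAper s' hs')]
        have hTlt : T s < m := by rw [← hAper s hs]; exact (hT_spec s).2
        have hTlt' : T s' < m := by rw [← hAper s' hs']; exact (hT_spec s').2
        have hkey : ∀ a b' : ℕ, a < b' → b' < m →
            greedySeq L q b' = f (ρ s) ^ q ^ b' → greedySeq L q a = f (ρ s) ^ q ^ a → False := by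
          intro a b' hab hbm hgb hga
          refine greedySeq_spec L q b' (lt_trans hbm hmL) a hab ?_
          rw [hga, hgb, ← pow_mul, ← pow_add, Nat.add_sub_cancel' hab.le]
        have hTT : T s = T s' := by
          rcases lt_trichotomy (T s) (T s') with h | h | h
          · exact absurd (hkey (T s) (T s') h hTlt' hgs' hgs) not_false
          · exact h
          · exact absurd (hkey (T s') (T s) h hTlt hgs hgs') not_false
        rw [(hT_spec s).1, (hT_spec s').1, hρss', hTT]
    have hsplit := Finset.card_filter_add_card_filter_not
      (s := (Finset.univ : Finset (ZMod n))) (p := fun i : ZMod n => g₀ i ≠ f i)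
    rw [Finset.card_univ, hcard] at hsplit
    rw [← hA] at hsplit
    omega
  -- assemble
  have hzero : ∀ g : ZMod n → L, ((Finset.univ.filter (fun i : ZMod n => g i ≠ (fun _ => (0:L)) i)).card)
      ∈ {k : ℕ | ∃ f : ZMod n → L, (∀ i, f ((q : ZMod n) * i) = f i ^ q) ∧
        k = (Finset.univ.filter (fun i : ZMod n => g i ≠ f i)).card} :=
    fun g => ⟨fun _ => 0, fun i => by rw [zero_pow hq0], rfl⟩
  apply le_antisymm
  · apply Finset.sup_le
    intro g _
    obtain ⟨f, hf, hcardle⟩ := hupper g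
    exact le_trans (Nat.sInf_le ⟨f, hf, rfl⟩) hcardle
  · refine le_trans ?_ (Finset.le_sup (Finset.mem_univ g₀))
    have hne : {k : ℕ | ∃ f : ZMod n → L, (∀ i, f ((q : ZMod n) * i) = f i ^ q) ∧
        k = (Finset.univ.filter (fun i : ZMod n => g₀ i ≠ f i)).card}.Nonempty := ⟨_, hzero g₀⟩
    obtain ⟨f, hf, heq⟩ := Nat.sInf_mem hne
    rw [heq]
    exact hlow f hf

/-- the symbol covering radius of `F_n ⊆ L^n` equals `n - B_m(n)`, where
`B_m(n)` is the number of `q`-cyclotomic classes modulo `n` of length exactly `m`;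
and for `n = q^m - 1`, `B_m(n) = (1/m) ∑_{r ∣ m} μ(m/r) (q^r - 1)`. -/
theorem stmt_15 (q m n : ℕ) (hq : IsPrimePow q) (hm : 0 < m)
    (L : Type*) [Field L] [Fintype L] (hL : Fintype.card L = q ^ m)
    [NeZero n] (hn : n ∣ q ^ m - 1) :
    (Finset.univ.sup (fun g : ZMod n → L =>
        sInf {k : ℕ | ∃ f : ZMod n → L,
          (∀ i, f ((q : ZMod n) * i) = f i ^ q) ∧
          k = (Finset.univ.filter (fun i : ZMod n => g i ≠ f i)).card}) =
      n - ((cycClasses q n).filter (fun C => C.card = m)).card) ∧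
    (n = q ^ m - 1 →
      ((((cycClasses q n).filter (fun C => C.card = m)).card : ℚ) =
        (1 / (m : ℚ)) * ∑ r ∈ m.divisors,
          (ArithmeticFunction.moebius (m / r) : ℚ) * ((q : ℚ) ^ r - 1))) := by
  have hq2 : 2 ≤ q := hq.two_le
  have hqm1 : 1 ≤ q ^ m := Nat.one_le_pow _ _ (by omega)
  have hq1 : (q : ZMod n) ^ m = 1 := by
    have h0 : ((q ^ m - 1 : ℕ) : ZMod n) = 0 := (ZMod.natCast_eq_zero_iff _ n).2 hn
    rw [Nat.cast_sub hqm1, Nat.cast_pow, Nat.cast_one, sub_eq_zero] at h0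
    exact h0
  exact ⟨part1 q m n L hq2 hm hL hq1, fun hneq => part2 hq2 hm hq1 hneq⟩
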